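/- Let α ∈ [0,1), C ≥ 0, D > 0, T > 0 and p ∈ ℕ. Then there exist K > 0 and h_0 > 0, depending only on α, C, D, T and p, with the following property: for all h ∈ (0, h_0], all ε ∈ (0, D·h], all N ∈ ℕ with N·h ≤ T, and all sequences (x_n)_{n=0}^{N}, (z_n)_{n=0}^{N} in normed vector spaces satisfying ‖x_0‖ ≤ C·ε^{p+1}, ‖z_0‖ ≤ C·ε^{p+1}, and for all 1 ≤ n ≤ N: ‖x_n‖ ≤ (1 + C·h)·‖x_{n−1}‖ + C·ε·‖z_{n−1}‖ + C·ε^{p+1} and ‖z_n‖ ≤ (α + C·ε)·‖z_{n−1}‖ + C·‖x_{n−1}‖ + C·ε^{p+1}/h, one has ‖x_n‖ ≤ K·ε^{p+1}/h and ‖z_n‖ ≤ K·ε^{p+1}/h for all 0 ≤ n ≤ N. -/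

import Mathlib

set_option maxHeartbeats 4000000 in
/-- **Two-component recurrence estimate (external-stage perturbation lemma).**
Given `α ∈ [0,1)`, `C ≥ 0`, `D > 0`, `T > 0`, `p ∈ ℕ`, there are `K > 0` and `h₀ > 0`
(depending only on these data) such that for all `h ∈ (0, h₀]`, all `ε ∈ (0, D·h]`, all
`N` with `N·h ≤ T`, and all sequences `x`, `z` in normed vector spaces satisfying
`‖x₀‖, ‖z₀‖ ≤ C ε^{p+1}` and the coupled recurrences
`‖x_n‖ ≤ (1 + C h)‖x_{n−1}‖ + C ε ‖z_{n−1}‖ + C ε^{p+1}`,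
`‖z_n‖ ≤ (α + C ε)‖z_{n−1}‖ + C ‖x_{n−1}‖ + C ε^{p+1}/h` for `1 ≤ n ≤ N`,
one has `‖x_n‖ ≤ K ε^{p+1}/h` and `‖z_n‖ ≤ K ε^{p+1}/h` for all `0 ≤ n ≤ N`. -/
theorem two_component_recurrence_estimate.{u, v}
    (α C D T : ℝ) (hα : 0 ≤ α) (hα1 : α < 1) (hC : 0 ≤ C) (hD : 0 < D) (hT : 0 < T)
    (p : ℕ) :
    ∃ K > (0 : ℝ), ∃ h₀ > (0 : ℝ),
      ∀ (E : Type u) (F : Type v) [NormedAddCommGroup E] [NormedSpace ℝ E]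
        [NormedAddCommGroup F] [NormedSpace ℝ F],
      ∀ h ∈ Set.Ioc (0 : ℝ) h₀, ∀ ε ∈ Set.Ioc (0 : ℝ) (D * h),
      ∀ N : ℕ, (N : ℝ) * h ≤ T →
      ∀ (x : ℕ → E) (z : ℕ → F),
        ‖x 0‖ ≤ C * ε ^ (p + 1) → ‖z 0‖ ≤ C * ε ^ (p + 1) →
        (∀ n, 1 ≤ n → n ≤ N →
          ‖x n‖ ≤ (1 + C * h) * ‖x (n - 1)‖ + C * ε * ‖z (n - 1)‖ + C * ε ^ (p + 1)) →
        (∀ n, 1 ≤ n → n ≤ N →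
          ‖z n‖ ≤ (α + C * ε) * ‖z (n - 1)‖ + C * ‖x (n - 1)‖ + C * ε ^ (p + 1) / h) →
        ∀ n ≤ N, ‖x n‖ ≤ K * ε ^ (p + 1) / h ∧ ‖z n‖ ≤ K * ε ^ (p + 1) / h := by
  have h1α : 0 < 1 - α := by linarith
  obtain ⟨γ, hγdef⟩ : ∃ γ : ℝ, γ = (C + 1) * 2 / (1 - α) := ⟨_, rfl⟩
  have hγ0 : 0 < γ := by rw [hγdef]; positivity
  have hγprop : γ * (1 - α) = (C + 1) * 2 := by
    rw [hγdef]; field_simp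
  obtain ⟨L, hLdef⟩ : ∃ L : ℝ, L = C + γ * C * D := ⟨_, rfl⟩
  have hL0 : 0 ≤ L := by rw [hLdef]; positivity
  obtain ⟨M, hMdef⟩ : ∃ M : ℝ, M = C * (1 + γ * D) := ⟨_, rfl⟩
  have hM0 : 0 ≤ M := by rw [hMdef]; positivity
  obtain ⟨K₁, hK₁def⟩ : ∃ K₁ : ℝ, K₁ = Real.exp (L * T) * (T + 1) * M := ⟨_, rfl⟩
  have hK₁0 : 0 ≤ K₁ := by rw [hK₁def]; positivity
  obtain ⟨K, hKdef⟩ : ∃ K : ℝ, K = K₁ + C + (C * K₁ + C) * 2 / (1 - α) + 1 := ⟨_, rfl⟩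
  have hK0 : 0 < K := by rw [hKdef]; positivity
  obtain ⟨h₀, hh₀def⟩ : ∃ h₀ : ℝ, h₀ = min 1 ((1 - α) / (2 * (C * D + 1))) := ⟨_, rfl⟩
  have hh₀0 : 0 < h₀ := by rw [hh₀def]; positivity
  refine ⟨K, hK0, h₀, hh₀0, ?_⟩
  intro E F _ _ _ _ h hh ε hε N hNT x z hx0 hz0 hxrec hzrec
  obtain ⟨hh0, hhle⟩ := hh
  obtain ⟨hε0, hεDh⟩ := hε
  have hh1 : h ≤ 1 := hhle.trans (hh₀def ▸ min_le_left _ _)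
  have hh2 : h ≤ (1 - α) / (2 * (C * D + 1)) := hhle.trans (hh₀def ▸ min_le_right _ _)
  have hεD : ε ≤ D := by nlinarith
  have hεp : 0 < ε ^ (p + 1) := pow_pos hε0 _
  have hεh : ε / h ≤ D := (div_le_iff₀ hh0).mpr hεDh
  -- contraction bound for the stiff block
  have hβ : α + C * ε ≤ (1 + α) / 2 := by
    have h3 : h * (2 * (C * D + 1)) ≤ 1 - α :=
      (le_div_iff₀ (by positivity : (0:ℝ) < 2 * (C * D + 1))).mp hh2
    nlinarith [mul_le_mul_of_nonneg_left hεDh hC]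
  -- key coefficient inequality for γ
  have hγkey : C + γ * ((1 + α) / 2) ≤ γ := by
    have h1 : γ - γ * α = (C + 1) * 2 := by linear_combination hγprop
    linarith
  have hLh : 1 ≤ 1 + L * h := by nlinarith [mul_nonneg hL0 hh0.le]
  -- main Lyapunov induction
  have hV : ∀ n, n ≤ N →
      ‖x n‖ + γ * ε * ‖z n‖ ≤ (1 + L * h) ^ n * (((n : ℝ) + 1) * (M * ε ^ (p + 1))) := by
    intro n
    induction n with
    | zero =>
      intro _
      have hz0' : γ * ε * ‖z 0‖ ≤ γ * ε * (C * ε ^ (p + 1)) :=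
        mul_le_mul_of_nonneg_left hz0 (by positivity)
      simp only [pow_zero, Nat.cast_zero, one_mul, zero_add]
      have : γ * ε * (C * ε ^ (p + 1)) ≤ γ * D * (C * ε ^ (p + 1)) := by
        have := mul_le_mul_of_nonneg_right (mul_le_mul_of_nonneg_left hεD hγ0.le)
          (by positivity : (0:ℝ) ≤ C * ε ^ (p + 1))
        linarith
      have hMε : M * ε ^ (p + 1) = C * ε ^ (p + 1) + γ * D * (C * ε ^ (p + 1)) := by
        rw [hMdef]; ring
      linarith
    | succ n ih =>
      intro hn1
      have hnN : n ≤ N := Nat.le_of_succ_le hn1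
      have IH := ih hnN
      have hx' := hxrec (n + 1) (Nat.le_add_left 1 n) hn1
      have hz' := hzrec (n + 1) (Nat.le_add_left 1 n) hn1
      simp only [Nat.add_sub_cancel] at hx' hz'
      set a := ‖x n‖ with ha
      set b := ‖z n‖ with hb
      have ha0 : 0 ≤ a := norm_nonneg _
      have hb0 : 0 ≤ b := norm_nonneg _
      have e0 : ‖x (n + 1)‖ + γ * ε * ‖z (n + 1)‖ ≤
          ((1 + C * h) * a + C * ε * b + C * ε ^ (p + 1)) +
            γ * ε * ((α + C * ε) * b + C * a + C * ε ^ (p + 1) / h) := by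
        have := mul_le_mul_of_nonneg_left hz' (by positivity : (0:ℝ) ≤ γ * ε)
        linarith
      -- coefficient of a
      have e1 : (1 + C * h) * a + γ * ε * (C * a) ≤ (1 + L * h) * a := by
        rw [hLdef]
        have h1 : γ * ε * C ≤ γ * (D * h) * C :=
          mul_le_mul_of_nonneg_right (mul_le_mul_of_nonneg_left hεDh hγ0.le) hC
        nlinarith [mul_le_mul_of_nonneg_right h1 ha0]
      -- coefficient of b
      have e2 : C * ε * b + γ * ε * ((α + C * ε) * b) ≤ (1 + L * h) * (γ * ε * b) := by
        have hcoef : C + γ * (α + C * ε) ≤ γ := by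
          have : γ * (α + C * ε) ≤ γ * ((1 + α) / 2) :=
            mul_le_mul_of_nonneg_left hβ hγ0.le
          linarith
        have h1 : ε * (C + γ * (α + C * ε)) * b ≤ ε * γ * b := by
          have := mul_le_mul_of_nonneg_left hcoef hε0.le
          nlinarith
        have h2 : ε * γ * b ≤ (1 + L * h) * (γ * ε * b) := by
          nlinarith [mul_nonneg (mul_nonneg hL0 hh0.le)
            (mul_nonneg (mul_nonneg hγ0.le hε0.le) hb0)]
        nlinarith
      -- forcing term
      have e3 : C * ε ^ (p + 1) + γ * ε * (C * ε ^ (p + 1) / h) ≤ M * ε ^ (p + 1) := by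
        have heq : γ * ε * (C * ε ^ (p + 1) / h) = γ * C * ε ^ (p + 1) * (ε / h) := by
          field_simp
        have : γ * C * ε ^ (p + 1) * (ε / h) ≤ γ * C * ε ^ (p + 1) * D :=
          mul_le_mul_of_nonneg_left hεh (by positivity)
        rw [heq, hMdef]; nlinarith
      have e4 : ‖x (n + 1)‖ + γ * ε * ‖z (n + 1)‖ ≤
          (1 + L * h) * (a + γ * ε * b) + M * ε ^ (p + 1) := by nlinarith
      have e5 : (1 + L * h) * (a + γ * ε * b) ≤
          (1 + L * h) * ((1 + L * h) ^ n * (((n : ℝ) + 1) * (M * ε ^ (p + 1)))) :=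
        mul_le_mul_of_nonneg_left IH (by linarith)
      have hpow1 : (1 : ℝ) ≤ (1 + L * h) ^ (n + 1) := one_le_pow₀ hLh
      have e6 : (1 + L * h) * ((1 + L * h) ^ n * (((n : ℝ) + 1) * (M * ε ^ (p + 1))))
            + M * ε ^ (p + 1)
          ≤ (1 + L * h) ^ (n + 1) * (((n : ℝ) + 1 + 1) * (M * ε ^ (p + 1))) := by
        have hrw : (1 + L * h) * ((1 + L * h) ^ n * (((n : ℝ) + 1) * (M * ε ^ (p + 1))))
            = (1 + L * h) ^ (n + 1) * (((n : ℝ) + 1) * (M * ε ^ (p + 1))) := by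
          rw [pow_succ]; ring
        rw [hrw]
        nlinarith [mul_le_mul_of_nonneg_right hpow1 (by positivity : (0:ℝ) ≤ M * ε ^ (p + 1))]
      push_cast
      linarith
  -- bound on x
  have hxb : ∀ n, n ≤ N → ‖x n‖ ≤ K₁ * ε ^ (p + 1) / h := by
    intro n hn
    have hVn := hV n hn
    have hx1 : ‖x n‖ ≤ (1 + L * h) ^ n * (((n : ℝ) + 1) * (M * ε ^ (p + 1))) := by
      nlinarith [norm_nonneg (z n), mul_nonneg (mul_nonneg hγ0.le hε0.le) (norm_nonneg (z n))]
    have hnh : (n : ℝ) * h ≤ T := by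
      have : (n : ℝ) ≤ (N : ℝ) := Nat.cast_le.mpr hn
      nlinarith
    have hpow : (1 + L * h) ^ n ≤ Real.exp (L * T) := by
      calc (1 + L * h) ^ n ≤ (Real.exp (L * h)) ^ n := by
            apply pow_le_pow_left₀ (by positivity)
            linarith [Real.add_one_le_exp (L * h)]
        _ = Real.exp ((n : ℝ) * (L * h)) := by rw [← Real.exp_nat_mul]
        _ ≤ Real.exp (L * T) := by
            apply Real.exp_le_exp.mpr
            nlinarith
    have hcnt : (n : ℝ) + 1 ≤ (T + 1) / h := by
      rw [le_div_iff₀ hh0]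
      nlinarith
    have : (1 + L * h) ^ n * (((n : ℝ) + 1) * (M * ε ^ (p + 1))) ≤
        Real.exp (L * T) * ((T + 1) / h * (M * ε ^ (p + 1))) := by
      apply mul_le_mul hpow
      · exact mul_le_mul_of_nonneg_right hcnt (by positivity)
      · positivity
      · positivity
    have heq : Real.exp (L * T) * ((T + 1) / h * (M * ε ^ (p + 1))) = K₁ * ε ^ (p + 1) / h := by
      rw [hK₁def]; field_simp
    linarith [heq ▸ this]
  -- bound on z
  set R : ℝ := (C * K₁ + C) * 2 / (1 - α) * ε ^ (p + 1) / h with hRdef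
  have hR0 : 0 ≤ R := by positivity
  have hzb : ∀ n, n ≤ N → ‖z n‖ ≤ max (C * ε ^ (p + 1)) R := by
    intro n
    induction n with
    | zero => intro _; exact hz0.trans (le_max_left _ _)
    | succ n ih =>
      intro hn1
      have hnN : n ≤ N := Nat.le_of_succ_le hn1
      have IH := ih hnN
      have hz' := hzrec (n + 1) (Nat.le_add_left 1 n) hn1
      simp only [Nat.add_sub_cancel] at hz'
      set m := max (C * ε ^ (p + 1)) R with hm
      have hm0 : 0 ≤ m := le_trans hR0 (le_max_right _ _)
      have hRm : R ≤ m := le_max_right _ _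
      have hxn := hxb n hnN
      have h1 : (α + C * ε) * ‖z n‖ ≤ (1 + α) / 2 * m := by
        have hαε0 : 0 ≤ α + C * ε := by positivity
        calc (α + C * ε) * ‖z n‖ ≤ (α + C * ε) * m :=
              mul_le_mul_of_nonneg_left IH hαε0
          _ ≤ (1 + α) / 2 * m := mul_le_mul_of_nonneg_right hβ hm0
      have h2 : C * ‖x n‖ ≤ C * (K₁ * ε ^ (p + 1) / h) :=
        mul_le_mul_of_nonneg_left hxn hC
      have h3 : (1 - α) / 2 * R = (C * K₁ + C) * ε ^ (p + 1) / h := by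
        rw [hRdef]; field_simp
      have h4 : C * (K₁ * ε ^ (p + 1) / h) + C * ε ^ (p + 1) / h
          = (C * K₁ + C) * ε ^ (p + 1) / h := by ring
      have h5 : (1 - α) / 2 * R ≤ (1 - α) / 2 * m :=
        mul_le_mul_of_nonneg_left hRm (by positivity)
      calc ‖z (n + 1)‖ ≤ (α + C * ε) * ‖z n‖ + C * ‖x n‖ + C * ε ^ (p + 1) / h := hz'
        _ ≤ (1 + α) / 2 * m + (C * K₁ + C) * ε ^ (p + 1) / h := by linarith
        _ = (1 + α) / 2 * m + (1 - α) / 2 * R := by rw [h3]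
        _ ≤ (1 + α) / 2 * m + (1 - α) / 2 * m := by linarith
        _ = m := by ring
  -- combine
  intro n hn
  have hεph : 0 < ε ^ (p + 1) / h := by positivity
  constructor
  · have := hxb n hn
    have hK₁K : K₁ ≤ K := by
      have : 0 ≤ (C * K₁ + C) * 2 / (1 - α) := by positivity
      rw [hKdef]; linarith
    calc ‖x n‖ ≤ K₁ * ε ^ (p + 1) / h := this
      _ ≤ K * ε ^ (p + 1) / h := by
          rw [mul_div_assoc, mul_div_assoc]
          exact mul_le_mul_of_nonneg_right hK₁K hεph.le
  · have hzn := hzb n hn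
    have hb1 : C * ε ^ (p + 1) ≤ K * ε ^ (p + 1) / h := by
      rw [le_div_iff₀ hh0]
      have hCK : C ≤ K := by
        have : 0 ≤ (C * K₁ + C) * 2 / (1 - α) := by positivity
        rw [hKdef]; linarith
      nlinarith [mul_le_mul_of_nonneg_left hh1 (by positivity : (0:ℝ) ≤ C * ε ^ (p + 1)),
        mul_le_mul_of_nonneg_right hCK hεp.le]
    have hb2 : R ≤ K * ε ^ (p + 1) / h := by
      have hR' : R = (C * K₁ + C) * 2 / (1 - α) * (ε ^ (p + 1) / h) := by
        rw [hRdef]; ring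
      have hK' : K * ε ^ (p + 1) / h = K * (ε ^ (p + 1) / h) := by ring
      rw [hR', hK']
      refine mul_le_mul_of_nonneg_right ?_ hεph.le
      rw [hKdef]; linarith
    exact hzn.trans (max_le hb1 hb2)
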